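/- If E₁ and E₂ are elliptic curves over ℂ, then the ℚ-algebra End(E₁ × E₂) ⊗ ℚ does not contain a subfield isomorphic to ℚ(ζ₅), the fifth cyclotomic field. -/

import Mathlib

open Polynomial

noncomputable section

private lemma pos5' : 0 < ((5:ℕ+):ℕ) := by norm_num

/-- `ℚ(ζ₅)` contains no square root of a negative rational. -/
private lemma no_sqrt_neg' (D : ℚ) (hD : D < 0) (s : CyclotomicField 5 ℚ)
    (hs : s * s = algebraMap ℚ _ D) : False := by
  haveI : IsCyclotomicExtension {5} ℚ (CyclotomicField 5 ℚ) := CyclotomicField.isCyclotomicExtension 5 ℚ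
  have hζ := IsCyclotomicExtension.zeta_spec 5 ℚ (CyclotomicField 5 ℚ)
  set ζ := IsCyclotomicExtension.zeta 5 ℚ (CyclotomicField 5 ℚ) with hζdef
  have hmin : minpoly ℚ ζ = cyclotomic (5:ℕ+) ℚ := (cyclotomic_eq_minpoly_rat hζ pos5').symm
  have hζ2 : IsPrimitiveRoot (ζ ^ 2) ((5:ℕ+):ℕ) := hζ.pow_of_coprime 2 (by decide)
  have hroot : aeval (ζ ^ 2) (minpoly ℚ ((hζ.powerBasis ℚ).gen)) = 0 := by
    rw [hζ.powerBasis_gen ℚ, hmin, aeval_def, ← eval_map, map_cyclotomic]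
    exact hζ2.isRoot_cyclotomic pos5'
  set g : CyclotomicField 5 ℚ →ₐ[ℚ] CyclotomicField 5 ℚ :=
    (hζ.powerBasis ℚ).lift (ζ ^ 2) hroot with hgdef
  have hg : g ζ = ζ ^ 2 := by
    have := (hζ.powerBasis ℚ).lift_gen (ζ ^ 2) hroot
    rwa [hζ.powerBasis_gen ℚ] at this
  haveI : FiniteDimensional ℚ (CyclotomicField 5 ℚ) :=
    IsCyclotomicExtension.finiteDimensional (S := {5}) (K := ℚ) (CyclotomicField 5 ℚ)
  haveI : Algebra.IsAlgebraic ℚ (CyclotomicField 5 ℚ) := Algebra.IsAlgebraic.of_finite ℚ _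
  set e : CyclotomicField 5 ℚ →ₐ[ℚ] ℂ := IsAlgClosed.lift with hedef
  set conjQ : ℂ →ₐ[ℚ] ℂ := Complex.conjAe.toAlgHom.restrictScalars ℚ with hcdef
  have hw5 : (e ζ) ^ ((5:ℕ+):ℕ) = 1 := by
    rw [← map_pow, show ((5:ℕ+):ℕ) = 5 from rfl, hζ.pow_eq_one, map_one]
  have hwne : e ζ ≠ 0 := by
    intro h
    rw [h] at hw5
    simp at hw5
  have habs : Complex.normSq (e ζ) = 1 := by
    have h5 : (Complex.normSq (e ζ)) ^ ((5:ℕ+):ℕ) = 1 := by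
      rw [← map_pow, hw5, map_one]
    have h0 : 0 ≤ Complex.normSq (e ζ) := Complex.normSq_nonneg _
    rcases lt_trichotomy (Complex.normSq (e ζ)) 1 with h | h | h
    · have := pow_lt_one₀ h0 h (by norm_num : ((5:ℕ+):ℕ) ≠ 0)
      rw [h5] at this; exact absurd this (lt_irrefl 1)
    · exact h
    · have := one_lt_pow₀ h (by norm_num : ((5:ℕ+):ℕ) ≠ 0)
      rw [h5] at this; exact absurd this (lt_irrefl 1)
  have hconj : (starRingEnd ℂ) (e ζ) = (e ζ) ^ 4 := by
    have h1 : (e ζ) * (starRingEnd ℂ) (e ζ) = 1 := by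
      rw [Complex.mul_conj]; exact_mod_cast habs
    have h2 : (e ζ) * (e ζ) ^ 4 = 1 := by
      rw [← pow_succ']
      exact hw5
    exact mul_left_cancel₀ hwne (h1.trans h2.symm)
  have hagree : ∀ x : CyclotomicField 5 ℚ, conjQ (e x) = e (g (g x)) := by
    have hadj : Algebra.adjoin ℚ {ζ} = ⊤ :=
      IsCyclotomicExtension.adjoin_primitive_root_eq_top hζ
    have hle : Algebra.adjoin ℚ {ζ} ≤ AlgHom.equalizer (conjQ.comp e) (e.comp (g.comp g)) := by
      apply Algebra.adjoin_le
      intro x hx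
      rw [Set.mem_singleton_iff] at hx
      subst hx
      show conjQ (e ζ) = e (g (g ζ))
      rw [hg, map_pow, hg, ← pow_mul]
      show (starRingEnd ℂ) (e ζ) = e (ζ ^ (2*2))
      rw [hconj, map_pow]
    intro x
    have hx : x ∈ Algebra.adjoin ℚ ({ζ} : Set (CyclotomicField 5 ℚ)) := by
      rw [hadj]; exact Algebra.mem_top
    exact hle hx
  have hgs2 : g s * g s = s * s := by
    rw [← map_mul, hs, AlgHom.commutes]
  have hggs : g (g s) = s := by
    rcases mul_self_eq_mul_self_iff.mp hgs2 with h | h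
    · rw [h, h]
    · rw [h, map_neg, h, neg_neg]
  have hreal : (starRingEnd ℂ) (e s) = e s := by
    have := hagree s
    rwa [hggs] at this
  have him : (e s).im = 0 := Complex.conj_eq_iff_im.mp hreal
  have hsq : (e s) * (e s) = (D : ℂ) := by
    rw [← map_mul, hs, e.commutes]
    exact eq_ratCast (algebraMap ℚ ℂ) D
  have hre : (e s).re * (e s).re = (D : ℝ) := by
    have := congrArg Complex.re hsq
    simpa [Complex.mul_re, him] using this
  have hD' : (D : ℝ) < 0 := by exact_mod_cast hD
  nlinarith [mul_self_nonneg (e s).re]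

/-- `ℚ(ζ₅)` contains no root of a rational quadratic with negative discriminant. -/
private lemma no_quadratic' (u v : ℚ) (huv : u ^ 2 + 4 * v < 0) (y : CyclotomicField 5 ℚ)
    (hy : y * y - u • y - algebraMap ℚ _ v = 0) : False := by
  have hy' : y * y - (u : CyclotomicField 5 ℚ) * y - (v : CyclotomicField 5 ℚ) = 0 := by
    rw [← Rat.smul_def, ← eq_ratCast (algebraMap ℚ (CyclotomicField 5 ℚ)) v]
    exact hy
  refine no_sqrt_neg' (u ^ 2 + 4 * v) huv
    (2 * y - (u : CyclotomicField 5 ℚ)) ?_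
  rw [eq_ratCast (algebraMap ℚ (CyclotomicField 5 ℚ))]
  push_cast
  linear_combination (4 : CyclotomicField 5 ℚ) * hy'

private lemma denom_clear' {W : Submodule ℚ ℂ} {n : ℕ} (hn : 0 < n) {z : ℂ}
    (h : (n : ℂ) * z ∈ W) : z ∈ W := by
  have h2 := W.smul_mem ((n : ℚ)⁻¹) h
  have h3 : ((n : ℚ)⁻¹ : ℚ) • ((n : ℂ) * z) = z := by
    rw [Rat.smul_def]
    have hn' : (n : ℂ) ≠ 0 := by exact_mod_cast hn.ne'
    push_cast
    field_simp
  rwa [h3] at h2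

set_option maxHeartbeats 2000000 in
/-- If `E₁ = ℂ/(ℤ + ℤτ₁)` and `E₂ = ℂ/(ℤ + ℤτ₂)` are elliptic curves over `ℂ`, then the
`ℚ`-algebra `End(E₁ × E₂) ⊗ ℚ` contains no subfield isomorphic to `ℚ(ζ₅)`.
Here `End(E₁ × E₂)` is realised as the ring of `2×2` complex matrices preserving the
lattice `Λ₁ × Λ₂`, and `End ⊗ ℚ` as the set of matrices with an integer multiple in it. -/
theorem stmt_1 (τ₁ τ₂ : ℂ) (h₁ : τ₁.im ≠ 0) (h₂ : τ₂.im ≠ 0) :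
    let Λ₁ : AddSubgroup ℂ := AddSubgroup.closure {1, τ₁}
    let Λ₂ : AddSubgroup ℂ := AddSubgroup.closure {1, τ₂}
    let End : Set (Matrix (Fin 2) (Fin 2) ℂ) :=
      {M | ∀ v : Fin 2 → ℂ, v 0 ∈ Λ₁ → v 1 ∈ Λ₂ →
        (M.mulVec v 0 ∈ Λ₁ ∧ M.mulVec v 1 ∈ Λ₂)}
    ¬ ∃ f : CyclotomicField 5 ℚ →+* Matrix (Fin 2) (Fin 2) ℂ,
        ∀ a : CyclotomicField 5 ℚ, ∃ n : ℕ, 0 < n ∧ (n : ℂ) • f a ∈ End := by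
  intro Λ₁ Λ₂ End
  rintro ⟨f, hf⟩
  set V₁ : Submodule ℚ ℂ := Submodule.span ℚ {1, τ₁} with hV₁def
  set V₂ : Submodule ℚ ℂ := Submodule.span ℚ {1, τ₂} with hV₂def
  have hΛV₁ : ∀ z : ℂ, z ∈ Λ₁ → z ∈ V₁ := by
    intro z hz
    exact (AddSubgroup.closure_le V₁.toAddSubgroup).mpr Submodule.subset_span hz
  have hΛV₂ : ∀ z : ℂ, z ∈ Λ₂ → z ∈ V₂ := by
    intro z hz
    exact (AddSubgroup.closure_le V₂.toAddSubgroup).mpr Submodule.subset_span hz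
  have hmv : ∀ (M : Matrix (Fin 2) (Fin 2) ℂ) (c : ℂ) (i : Fin 2),
      M.mulVec ![c, 0] i = M i 0 * c := by
    intro M c i
    simp [Matrix.mulVec, dotProduct, Fin.sum_univ_two]
  -- entry memberships
  have mems : ∀ a : CyclotomicField 5 ℚ,
      f a 0 0 ∈ V₁ ∧ f a 1 0 ∈ V₂ ∧ f a 0 0 * τ₁ ∈ V₁ := by
    intro a
    obtain ⟨n, hn, hM⟩ := hf a
    have hM' : ∀ v : Fin 2 → ℂ, v 0 ∈ Λ₁ → v 1 ∈ Λ₂ →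
        (((n:ℂ) • f a).mulVec v 0 ∈ Λ₁ ∧ ((n:ℂ) • f a).mulVec v 1 ∈ Λ₂) := hM
    have h1 : (1:ℂ) ∈ Λ₁ := AddSubgroup.subset_closure (by simp)
    have hτ : τ₁ ∈ Λ₁ := AddSubgroup.subset_closure (by simp)
    have h0 : (0:ℂ) ∈ Λ₂ := zero_mem _
    have e1 := hM' ![1, 0] (by simpa using h1) (by simpa using h0)
    have e2 := hM' ![τ₁, 0] (by simpa using hτ) (by simpa using h0)
    rw [hmv, hmv] at e1 e2
    simp only [Matrix.smul_apply, smul_eq_mul, mul_one] at e1 e2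
    refine ⟨?_, ?_, ?_⟩
    · exact denom_clear' hn (hΛV₁ _ e1.1)
    · exact denom_clear' hn (hΛV₂ _ e1.2)
    · refine denom_clear' hn (W := V₁) ?_
      have := hΛV₁ _ e2.1
      rwa [mul_assoc] at this
  -- f is ℚ-linear
  have hsmulF : ∀ (q : ℚ) (x : CyclotomicField 5 ℚ), f (q • x) = q • f x := by
    intro q x
    exact map_smul f.toRatAlgHom q x
  -- the first-column linear map
  set ψ : CyclotomicField 5 ℚ →ₗ[ℚ] ℂ × ℂ :=
    { toFun := fun x => (f x 0 0, f x 1 0)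
      map_add' := fun x y => by
        simp only [map_add, Matrix.add_apply, Prod.mk_add_mk]
      map_smul' := fun q x => by
        simp only [hsmulF, Matrix.smul_apply, RingHom.id_apply, Prod.smul_mk]
        exact congrArg₂ Prod.mk (congrFun (congrFun (hsmulF q x) 0) 0)
          (congrFun (congrFun (hsmulF q x) 1) 0) } with hψdef
  have hψ_apply : ∀ x, ψ x = (f x 0 0, f x 1 0) := fun _ => rfl
  have hψinj : Function.Injective ψ := by
    apply (injective_iff_map_eq_zero ψ).mpr
    intro x hx
    by_contra hx0
    have h00 : f x 0 0 = 0 := congrArg Prod.fst hx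
    have h10 : f x 1 0 = 0 := congrArg Prod.snd hx
    have h1 : f (x⁻¹ * x) = 1 := by rw [inv_mul_cancel₀ hx0, map_one]
    have hcontra : (1 : Matrix (Fin 2) (Fin 2) ℂ) 0 0 = 0 := by
      rw [← h1, map_mul, Matrix.mul_apply, Fin.sum_univ_two, h00, h10]
      ring
    simp [Matrix.one_apply] at hcontra
  -- dimensions
  haveI : IsCyclotomicExtension {5} ℚ (CyclotomicField 5 ℚ) := CyclotomicField.isCyclotomicExtension 5 ℚ
  haveI : FiniteDimensional ℚ (CyclotomicField 5 ℚ) :=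
    IsCyclotomicExtension.finiteDimensional (S := {5}) (K := ℚ) (CyclotomicField 5 ℚ)
  have hK4 : Module.finrank ℚ (CyclotomicField 5 ℚ) = 4 := by
    rw [IsCyclotomicExtension.finrank (n := 5) (CyclotomicField 5 ℚ)
      (Polynomial.cyclotomic.irreducible_rat pos5')]
    decide
  haveI hfdV₁ : FiniteDimensional ℚ V₁ := FiniteDimensional.span_of_finite ℚ (Set.toFinite _)
  haveI hfdV₂ : FiniteDimensional ℚ V₂ := FiniteDimensional.span_of_finite ℚ (Set.toFinite _)
  have hr1 : Module.finrank ℚ V₁ ≤ 2 := by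
    classical
    refine (finrank_span_le_card (R := ℚ) ({1, τ₁} : Set ℂ)).trans ?_
    rw [Set.toFinset_insert, Set.toFinset_singleton]
    exact (Finset.card_insert_le _ _).trans (by simp)
  have hr2 : Module.finrank ℚ V₂ ≤ 2 := by
    classical
    refine (finrank_span_le_card (R := ℚ) ({1, τ₂} : Set ℂ)).trans ?_
    rw [Set.toFinset_insert, Set.toFinset_singleton]
    exact (Finset.card_insert_le _ _).trans (by simp)
  have eqv : (V₁.prod V₂) ≃ₗ[ℚ] (V₁ × V₂) :=
    { toFun := fun x => (⟨x.1.1, x.2.1⟩, ⟨x.1.2, x.2.2⟩)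
      map_add' := fun x y => rfl
      map_smul' := fun c x => rfl
      invFun := fun p => ⟨(p.1.1, p.2.1), ⟨p.1.2, p.2.2⟩⟩
      left_inv := fun x => rfl
      right_inv := fun p => rfl }
  haveI : FiniteDimensional ℚ (V₁.prod V₂) := Module.Finite.equiv eqv.symm
  have hprodrank : Module.finrank ℚ (V₁.prod V₂) ≤ 4 := by
    rw [eqv.finrank_eq, Module.finrank_prod]
    omega
  -- range of ψ is exactly V₁ × V₂
  have hle : LinearMap.range ψ ≤ V₁.prod V₂ := by
    rintro z ⟨x, rfl⟩
    exact ⟨(mems x).1, (mems x).2.1⟩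
  have hrange : LinearMap.range ψ = V₁.prod V₂ := by
    apply Submodule.eq_of_le_of_finrank_le hle
    rw [LinearMap.finrank_range_of_inj hψinj, hK4]
    exact hprodrank
  -- get the special element y
  have hmem : ((τ₁, 0) : ℂ × ℂ) ∈ V₁.prod V₂ :=
    ⟨Submodule.subset_span (by simp), zero_mem _⟩
  rw [← hrange] at hmem
  obtain ⟨y, hy⟩ := hmem
  have hy00 : f y 0 0 = τ₁ := congrArg Prod.fst hy
  have hy10 : f y 1 0 = 0 := congrArg Prod.snd hy
  -- τ₁ ^ 2 ∈ V₁, giving the quadratic relation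
  have hττ : τ₁ * τ₁ ∈ V₁ := by
    have := (mems y).2.2
    rwa [hy00] at this
  obtain ⟨cv, cu, hcvu⟩ := Submodule.mem_span_pair.mp hττ
  have hrel : (cv : ℂ) + (cu : ℂ) * τ₁ = τ₁ * τ₁ := by
    rw [← hcvu, Rat.smul_def, Rat.smul_def, mul_one]
  -- negative discriminant
  have hdisc : (cu : ℝ) ^ 2 + 4 * (cv : ℝ) < 0 := by
    have hre := congrArg Complex.re hrel
    have him := congrArg Complex.im hrel
    simp only [Complex.add_re, Complex.add_im, Complex.mul_re, Complex.mul_im,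
      Complex.ratCast_re, Complex.ratCast_im] at hre him
    have h3 : ((cu : ℝ) - 2 * τ₁.re) * τ₁.im = 0 := by nlinarith [him]
    rcases mul_eq_zero.mp h3 with h4 | h4
    · have hcu : (cu : ℝ) = 2 * τ₁.re := by linarith
      have himsq : 0 < τ₁.im * τ₁.im := by
        rcases lt_or_gt_of_ne h₁ with h | h
        · nlinarith
        · nlinarith
      nlinarith [hre]
    · exact absurd h4 h₁
  have hdiscQ : cu ^ 2 + 4 * cv < 0 := by
    have : ((cu ^ 2 + 4 * cv : ℚ) : ℝ) < 0 := by push_cast; nlinarith [hdisc]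
    exact_mod_cast this
  -- y satisfies the quadratic
  have hyrel : y * y - cu • y - algebraMap ℚ _ cv = 0 := by
    apply hψinj
    rw [map_zero, map_sub, map_sub]
    have hyy : ψ (y * y) = (τ₁ * τ₁, 0) := by
      rw [hψ_apply]
      have hyy0 : f (y * y) 0 0 = τ₁ * τ₁ := by
        rw [map_mul, Matrix.mul_apply, Fin.sum_univ_two, hy00, hy10]
        ring
      have hyy1 : f (y * y) 1 0 = 0 := by
        rw [map_mul, Matrix.mul_apply, Fin.sum_univ_two, hy00, hy10]
        ring
      rw [hyy0, hyy1]
    have hcusmul : ψ (cu • y) = ((cu : ℂ) * τ₁, 0) := by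
      rw [map_smul, hy]
      simp [Prod.smul_mk, Rat.smul_def]
    have hcv : ψ (algebraMap ℚ _ cv) = ((cv : ℂ), 0) := by
      rw [hψ_apply]
      have hmap : f (algebraMap ℚ (CyclotomicField 5 ℚ) cv)
          = algebraMap ℚ (Matrix (Fin 2) (Fin 2) ℂ) cv := f.toRatAlgHom.commutes cv
      rw [hmap]
      have h00 : algebraMap ℚ (Matrix (Fin 2) (Fin 2) ℂ) cv 0 0 = (cv : ℂ) := by
        rw [Matrix.algebraMap_matrix_apply]
        simp [eq_ratCast (algebraMap ℚ ℂ) cv]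
      have h10 : algebraMap ℚ (Matrix (Fin 2) (Fin 2) ℂ) cv 1 0 = 0 := by
        rw [Matrix.algebraMap_matrix_apply]
        simp
      rw [h00, h10]
    rw [hyy, hcusmul, hcv, Prod.mk_sub_mk, Prod.mk_sub_mk]
    have hfst : τ₁ * τ₁ - (cu : ℂ) * τ₁ - (cv : ℂ) = 0 := by linear_combination -hrel
    rw [hfst]
    simp
  exact no_quadratic' cu cv hdiscQ y hyrel
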